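/- Let G be a bipartite graph with girth g. If W is a closed walk with cycle of length i ≤ 2g−2, then W consists of exactly one cycle ζ together with some closed cycle-free walks attached at nodes of ζ; in particular, the edge set of W contains the edge set of a unique cycle. -/

import Mathlib

open SimpleGraph

def cycleFree {V : Type*} {G : SimpleGraph V} {u v : V} (w : G.Walk u v) : Prop :=
  (SimpleGraph.fromEdgeSet {e | e ∈ w.edges}).IsAcyclic

def isCWWC {V : Type*} {G : SimpleGraph V} {u : V} (w : G.Walk u u) : Prop :=
  ¬ w.IsCycle ∧ ¬ cycleFree w




/-- Parity of edge-incidences along a walk. -/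
lemma walk_countP_parity {V : Type*} [DecidableEq V] {G : SimpleGraph V} {u v : V}
    (p : G.Walk u v) (x : V) :
    Even (Multiset.countP (fun (e : Sym2 V) => x ∈ e) (↑p.edges)
      + (if x = u then 1 else 0) + (if x = v then 1 else 0)) := by
  induction p with
  | nil =>
    simp only [Walk.edges_nil, Multiset.coe_nil, Multiset.countP_zero, Nat.zero_add]
    split_ifs <;> simp
  | @cons a b c h q ih =>
    have hne : a ≠ b := h.ne
    rw [Walk.edges_cons, ← Multiset.cons_coe, Multiset.countP_cons]
    have hmem : (if x ∈ s(a,b) then 1 else 0)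
        = (if x = a then 1 else 0) + (if x = b then 1 else 0) := by
      simp only [Sym2.mem_iff]
      by_cases h1 : x = a <;> by_cases h2 : x = b
      · exact absurd (h1.symm.trans h2) hne
      all_goals simp [h1, h2, hne, hne.symm]
    rw [hmem]
    rw [Nat.even_iff] at ih ⊢
    omega


lemma countP_add_odd_card_even {α : Type*} [DecidableEq α] (m : Multiset α)
    (p : α → Prop) [DecidablePred p] :
    Even (Multiset.countP p m
      + ((m.toFinset.filter (fun e => Odd (m.count e))).filter p).card) := by
  rw [Multiset.countP_eq_card_filter]
  have h1 : Multiset.card (Multiset.filter p m) = ∑ a ∈ m.toFinset.filter p, m.count a := by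
    rw [← Multiset.toFinset_sum_count_eq (Multiset.filter p m), Multiset.toFinset_filter]
    apply Finset.sum_congr rfl
    intro a ha
    rw [Multiset.count_filter, if_pos (Finset.mem_filter.mp ha).2]
  rw [h1, Finset.filter_comm, Finset.card_filter, ← Finset.sum_add_distrib]
  apply Finset.even_sum
  intro a _
  rcases Nat.even_or_odd (m.count a) with he | ho
  · simp [Nat.not_odd_iff_even.mpr he, he]
  · simpa [ho] using ho.add_one
lemma toFinset_filter_card_of_nodup {α : Type*} [DecidableEq α] {l : List α} (h : l.Nodup)
    (p : α → Prop) [DecidablePred p] :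
    (l.toFinset.filter p).card = Multiset.countP p (↑l) := by
  rw [Multiset.countP_eq_card_filter]
  have h2 : l.toFinset = Multiset.toFinset (↑l) := rfl
  rw [h2, ← Multiset.toFinset_filter,
    Multiset.toFinset_card_of_nodup (Multiset.Nodup.filter p (Multiset.coe_nodup.mpr h))]


/-- transfer a cycle of `fromEdgeSet S` to `G` when `S ⊆ G.edgeSet`. -/
lemma cycle_transfer {V : Type*} {G : SimpleGraph V} {S : Set (Sym2 V)}
    (hS : S ⊆ G.edgeSet) {u : V} {c : (SimpleGraph.fromEdgeSet S).Walk u u}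
    (hc : c.IsCycle) :
    ∃ c' : G.Walk u u, c'.IsCycle ∧ ∀ e ∈ c'.edges, e ∈ S := by
  have he : ∀ e ∈ c.edges, e ∈ S := by
    intro e h
    have := c.edges_subset_edgeSet h
    rw [edgeSet_fromEdgeSet] at this
    exact this.1
  refine ⟨c.transfer G (fun e h => hS (he e h)), hc.transfer _, ?_⟩
  rw [Walk.edges_transfer]
  exact he

/-- A nonempty finite edge set with all vertex degrees even contains a cycle. -/
lemma exists_cycle_of_even_deg {V : Type*} [DecidableEq V] (G : SimpleGraph V)
    (T : Finset (Sym2 V)) (hT : ∀ e ∈ T, e ∈ G.edgeSet)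
    (hdeg : ∀ x : V, Even ((T.filter (fun e => x ∈ e)).card))
    (hne : T.Nonempty) :
    ∃ (u : V) (c : G.Walk u u), c.IsCycle ∧ ∀ e ∈ c.edges, e ∈ T := by
  classical
  set H := SimpleGraph.fromEdgeSet (↑T : Set (Sym2 V)) with hH
  have hTG : (↑T : Set (Sym2 V)) ⊆ G.edgeSet := fun e he => hT e he
  have hHadj : ∀ {x y : V}, H.Adj x y → s(x,y) ∈ T := by
    intro x y h
    rw [hH, fromEdgeSet_adj] at h
    exact_mod_cast h.1
  have hnd : ∀ e ∈ T, ¬ e.IsDiag := fun e he => G.not_isDiag_of_mem_edgeSet (hT e he)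
  -- every endpoint of an `H`-edge has a second neighbour
  have hdeg2 : ∀ {x y : V}, H.Adj x y → ∃ z, z ≠ y ∧ H.Adj x z := by
    intro x y hxy
    have hmem : s(x,y) ∈ T.filter (fun e => x ∈ e) :=
      Finset.mem_filter.mpr ⟨hHadj hxy, by simp⟩
    have h2 : 1 < (T.filter (fun e => x ∈ e)).card := by
      obtain ⟨k, hk⟩ := hdeg x
      have h1 : 0 < (T.filter (fun e => x ∈ e)).card := Finset.card_pos.mpr ⟨_, hmem⟩
      omega
    obtain ⟨e, he, hne'⟩ := Finset.exists_mem_ne h2 s(x,y)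
    rw [Finset.mem_filter] at he
    obtain ⟨heT, hxe⟩ := he
    refine ⟨Sym2.Mem.other' hxe, ?_, ?_⟩
    · intro hzy
      exact hne' (by rw [← Sym2.other_spec' hxe, hzy])
    · rw [hH, fromEdgeSet_adj]
      refine ⟨by rw [Sym2.other_spec' hxe]; exact_mod_cast heT, ?_⟩
      intro hxz
      exact hnd e heT (by rw [← Sym2.other_spec' hxe]; exact Sym2.mk_isDiag_iff.mpr hxz)
  -- paths are bounded in length by `T.card`
  have hbound : ∀ {x y : V} (p : H.Walk x y), p.IsPath → p.length ≤ T.card := by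
    intro x y p hp
    have hnodup := hp.isTrail.edges_nodup
    have hsub : p.edges.toFinset ⊆ T := by
      intro e he
      rw [List.mem_toFinset] at he
      have := p.edges_subset_edgeSet he
      rw [edgeSet_fromEdgeSet] at this
      exact_mod_cast this.1
    calc p.length = p.edges.length := (Walk.length_edges p).symm
    _ = p.edges.toFinset.card := (List.toFinset_card_of_nodup hnodup).symm
    _ ≤ T.card := Finset.card_le_card hsub
  -- extend paths or find a cycle
  have claim : ∀ n : ℕ, (∃ (u : V) (c : H.Walk u u), c.IsCycle) ∨
      (∃ (x y : V) (p : H.Walk x y), p.IsPath ∧ p.length = n + 1) := by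
    intro n
    induction n with
    | zero =>
      right
      obtain ⟨e, he⟩ := hne
      have he2 : ∃ a b : V, e = s(a,b) := by
        induction e using Sym2.ind with
        | _ a b => exact ⟨a, b, rfl⟩
      obtain ⟨a, b, rfl⟩ := he2
      have hab : H.Adj a b := by
        rw [hH, fromEdgeSet_adj]
        exact ⟨by exact_mod_cast he, fun h => hnd _ he (Sym2.mk_isDiag_iff.mpr h)⟩
      refine ⟨a, b, Walk.cons hab Walk.nil, ?_, by simp⟩
      rw [Walk.cons_isPath_iff]
      exact ⟨Walk.IsPath.nil, by simp [hab.ne]⟩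
    | succ n ih =>
      rcases ih with h | ⟨x, y, p, hp, hl⟩
      · exact Or.inl h
      cases p with
      | nil => simp at hl
      | @cons _ s _ hxs q =>
        obtain ⟨z, hzs, hxz⟩ := hdeg2 hxs
        rw [Walk.cons_isPath_iff] at hp
        obtain ⟨hq, hxq⟩ := hp
        by_cases hz : z ∈ (Walk.cons hxs q).support
        · -- found a cycle
          left
          have hzx : z ≠ x := fun h => H.irrefl (h ▸ hxz)
          have hzq : z ∈ q.support := by
            rw [Walk.support_cons] at hz
            rcases List.mem_cons.mp hz with h | h
            · exact absurd h hzx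
            · exact h
          set r := q.takeUntil z hzq with hr
          have hrp : r.IsPath := hq.takeUntil hzq
          have hxr : x ∉ r.support := fun h => hxq (q.support_takeUntil_subset hzq h)
          have hP : (Walk.cons hxs r).IsPath := by
            rw [Walk.cons_isPath_iff]
            exact ⟨hrp, hxr⟩
          refine ⟨z, Walk.cons hxz.symm (Walk.cons hxs r), ?_⟩
          rw [Walk.cons_isCycle_iff]
          refine ⟨hP, ?_⟩
          intro hmem
          rw [Walk.edges_cons] at hmem
          rcases List.mem_cons.mp hmem with h | h
          · rw [Sym2.eq_iff] at h
            rcases h with ⟨h1, _⟩ | ⟨h1, _⟩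
            · exact hzx h1
            · exact hzs h1
          · rw [Sym2.eq_swap] at h
            exact hxr (r.fst_mem_support_of_mem_edges h)
        · -- extend the path
          right
          refine ⟨z, y, Walk.cons hxz.symm (Walk.cons hxs q), ?_, ?_⟩
          · rw [Walk.cons_isPath_iff]
            exact ⟨Walk.cons_isPath_iff _ _ |>.mpr ⟨hq, hxq⟩, hz⟩
          · simp [hl]
  rcases claim T.card with ⟨u, c, hc⟩ | ⟨x, y, p, hp, hl⟩
  · obtain ⟨c', hc', hce⟩ := cycle_transfer hTG hc
    exact ⟨u, c', hc', fun e he => by exact_mod_cast hce e he⟩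
  · have := hbound p hp
    omega


lemma cycle_filter_card_even {V : Type*} [DecidableEq V] {G : SimpleGraph V} {u : V}
    {c : G.Walk u u} (hc : c.IsCycle) (x : V) :
    Even ((c.edges.toFinset.filter (fun e => x ∈ e)).card) := by
  rw [toFinset_filter_card_of_nodup hc.isCircuit.isTrail.edges_nodup]
  have h := walk_countP_parity c x
  rw [Nat.even_iff] at h ⊢
  omega

/-- In a bipartite graph of girth `g`, a closed walk with cycle of length at most
`2g - 2` consists of exactly one cycle `ζ` together with closed cycle-free parts:
its edge set contains the edge set of a unique cycle, and moreover every edge outside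
that cycle is traversed an even number of times and the edges outside the cycle form
an acyclic subgraph. -/
theorem stmt3 {V : Type*} [DecidableEq V] (G : SimpleGraph V) (U : Set V)
    (hbip : ∀ a b : V, G.Adj a b → (a ∈ U ↔ b ∉ U))
    (g : ℕ) (hg : G.girth = g)
    (v : V) (w : G.Walk v v) (hW : isCWWC w) (hlen : w.length ≤ 2 * g - 2) :
    (∃! s : Set (Sym2 V),
      (∃ (u : V) (c : G.Walk u u), c.IsCycle ∧ {e | e ∈ c.edges} = s) ∧
      s ⊆ {e | e ∈ w.edges}) ∧
    (∀ s : Set (Sym2 V),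
      (∃ (u : V) (c : G.Walk u u), c.IsCycle ∧ {e | e ∈ c.edges} = s) →
      s ⊆ {e | e ∈ w.edges} →
      (∀ e ∈ w.edges, e ∉ s → 2 ∣ w.edges.count e) ∧
      (SimpleGraph.fromEdgeSet {e | e ∈ w.edges ∧ e ∉ s}).IsAcyclic) := by
  classical
  obtain ⟨hnc, hncf⟩ := hW
  set m : Multiset (Sym2 V) := (↑w.edges : Multiset (Sym2 V)) with hm
  have hSsub : {e : Sym2 V | e ∈ w.edges} ⊆ G.edgeSet := fun e he => w.edges_subset_edgeSet he
  rw [cycleFree] at hncf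
  simp only [SimpleGraph.IsAcyclic] at hncf
  push_neg at hncf
  obtain ⟨v0, c0, hc0⟩ := hncf
  obtain ⟨γ, hγ, hγe⟩ := cycle_transfer hSsub hc0
  have hγe' : ∀ e ∈ γ.edges, e ∈ w.edges := hγe
  have hnac : ¬ G.IsAcyclic := fun h => h γ hγ
  have hg3 : 3 ≤ g := hg ▸ three_le_girth hnac
  have hglen : ∀ (a : V) (c : G.Walk a a), c.IsCycle → g ≤ c.length := by
    intro a c hc
    have h1 : G.egirth ≤ (c.length : ℕ∞) := le_egirth.mp le_rfl a c hc
    have h2 := ENat.toNat_le_toNat h1 (by simp)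
    have hg' : G.egirth.toNat = g := hg
    rwa [ENat.toNat_coe, hg'] at h2
  have hmemS : ∀ e : Sym2 V, e ∈ m.toFinset ↔ e ∈ w.edges := fun e => by
    rw [hm, Multiset.mem_toFinset, Multiset.mem_coe]
  have hmcard : Multiset.card m ≤ 2*g - 2 := by
    rw [hm]
    rw [Multiset.coe_card, Walk.length_edges]
    exact hlen
  set O := m.toFinset.filter (fun e => Odd (m.count e)) with hO
  set F := m.toFinset.filter (fun e => ¬ Odd (m.count e)) with hF
  have hOsubT : O ⊆ m.toFinset := Finset.filter_subset _ _
  have hFsubT : F ⊆ m.toFinset := Finset.filter_subset _ _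
  have hTsubE : ∀ e ∈ m.toFinset, e ∈ G.edgeSet := fun e he => hSsub ((hmemS e).mp he)
  -- the key counting inequality
  have hsplit : O.card + 2 * F.card ≤ Multiset.card m := by
    have h0 : ∑ e ∈ O, m.count e + ∑ e ∈ F, m.count e = Multiset.card m := by
      rw [hO, hF, Finset.sum_filter_add_sum_filter_not, Multiset.toFinset_sum_count_eq]
    have h1 : O.card • 1 ≤ ∑ e ∈ O, m.count e :=
      Finset.card_nsmul_le_sum O (fun e => m.count e) 1
        (fun e he => Multiset.one_le_count_iff_mem.mpr
          (Multiset.mem_toFinset.mp (hOsubT he)))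
    have h2 : F.card • 2 ≤ ∑ e ∈ F, m.count e := by
      apply Finset.card_nsmul_le_sum
      intro e he
      rw [hF, Finset.mem_filter] at he
      have hc1 : 1 ≤ m.count e := Multiset.one_le_count_iff_mem.mpr
        (Multiset.mem_toFinset.mp he.1)
      obtain ⟨k, hk⟩ := Nat.not_odd_iff_even.mp he.2
      omega
    simp only [smul_eq_mul, mul_one] at h1 h2
    omega
  -- parity: the odd edges have even degrees
  have hOdeg : ∀ x : V, Even ((O.filter (fun e => x ∈ e)).card) := by
    intro x
    have h1 := walk_countP_parity w x
    have h2 := countP_add_odd_card_even m (fun (e : Sym2 V) => x ∈ e)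
    rw [← hm] at h1
    rw [← hO] at h2
    rw [Nat.even_iff] at h1 h2 ⊢
    omega
  -- a cycle's edge set has at least g elements
  have cycCard : ∀ (u : V) (c : G.Walk u u), c.IsCycle → ∀ (X : Finset (Sym2 V)),
      (∀ e ∈ c.edges, e ∈ X) → g ≤ X.card := by
    intro u c hc X hX
    have h1 : c.edges.toFinset ⊆ X := fun e he => hX e (List.mem_toFinset.mp he)
    have h2 : c.edges.toFinset.card = c.length := by
      rw [List.toFinset_card_of_nodup hc.isCircuit.isTrail.edges_nodup, Walk.length_edges]
    have h3 := Finset.card_le_card h1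
    have h4 := hglen u c hc
    omega
  -- O is nonempty
  have hOne : O.Nonempty := by
    rw [Finset.nonempty_iff_ne_empty]
    intro hemp
    have hallF : F = m.toFinset := by
      rw [hF]
      apply Finset.filter_true_of_mem
      intro e he ho
      exact (Finset.eq_empty_iff_forall_notMem.mp hemp e)
        (by rw [hO]; exact Finset.mem_filter.mpr ⟨he, ho⟩)
    have hγg : g ≤ m.toFinset.card :=
      cycCard v0 γ hγ _ (fun e he => (hmemS e).mpr (hγe' e he))
    have h0 : O.card = 0 := by rw [hemp, Finset.card_empty]
    have hFc : F.card = m.toFinset.card := by rw [hallF]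
    omega
  -- the cycle δ whose edges are exactly O
  obtain ⟨u0, δ, hδ, hδe⟩ := exists_cycle_of_even_deg G O
    (fun e he => hTsubE e (hOsubT he)) hOdeg hOne
  set D := δ.edges.toFinset with hD
  have hDsub : D ⊆ O := fun e he => hδe e (List.mem_toFinset.mp he)
  have hDg : g ≤ D.card := by
    have := cycCard u0 δ hδ D (fun e he => List.mem_toFinset.mpr he)
    exact this
  have hODeq : O = D := by
    by_contra hne'
    have hsd : (O \ D).Nonempty := by
      rw [Finset.sdiff_nonempty]
      intro hsub
      exact hne' (Finset.Subset.antisymm hsub hDsub)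
    have hdeg' : ∀ x : V, Even (((O \ D).filter (fun e => x ∈ e)).card) := by
      intro x
      have h1 := hOdeg x
      have h2 := cycle_filter_card_even hδ x
      rw [← hD] at h2
      have hfil : (O \ D).filter (fun e => x ∈ e)
          = O.filter (fun e => x ∈ e) \ D.filter (fun e => x ∈ e) := by
        ext e
        simp only [Finset.mem_filter, Finset.mem_sdiff]
        tauto
      have hsubf : D.filter (fun e => x ∈ e) ⊆ O.filter (fun e => x ∈ e) :=
        Finset.filter_subset_filter _ hDsub
      have hcards := Finset.card_sdiff_add_card_eq_card hsubf
      rw [hfil]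
      rw [Nat.even_iff] at h1 h2 ⊢
      omega
    obtain ⟨u1, ε, hε, hεe⟩ := exists_cycle_of_even_deg G (O \ D)
      (fun e he => hTsubE e (hOsubT (Finset.sdiff_subset he))) hdeg' hsd
    have hεg : g ≤ (O \ D).card := cycCard u1 ε hε _ hεe
    have hcards := Finset.card_sdiff_add_card_eq_card hDsub
    omega
  have hOg : g ≤ O.card := hODeq ▸ hDg
  -- uniqueness of cycles inside the edges of w
  have huniq : ∀ (u : V) (c : G.Walk u u), c.IsCycle →
      (∀ e ∈ c.edges, e ∈ w.edges) → c.edges.toFinset = O := by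
    intro u c hc hce
    set C := c.edges.toFinset with hC
    by_contra hne'
    have hCsub : C ⊆ m.toFinset := fun e he => (hmemS e).mpr (hce e (List.mem_toFinset.mp he))
    have hCg : g ≤ C.card := cycCard u c hc C (fun e he => List.mem_toFinset.mpr he)
    have hD'ne : ((C \ O) ∪ (O \ C)).Nonempty := by
      rw [Finset.nonempty_iff_ne_empty]
      intro hemp
      rw [Finset.union_eq_empty] at hemp
      exact hne' (Finset.Subset.antisymm
        (Finset.sdiff_eq_empty_iff_subset.mp hemp.1)
        (Finset.sdiff_eq_empty_iff_subset.mp hemp.2))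
    have hD'deg : ∀ x : V, Even ((((C \ O) ∪ (O \ C)).filter (fun e => x ∈ e)).card) := by
      intro x
      have h1 := hOdeg x
      have h2 := cycle_filter_card_even hc x
      rw [← hC] at h2
      have e1 : (C \ O).filter (fun e => x ∈ e)
          = C.filter (fun e => x ∈ e) \ O.filter (fun e => x ∈ e) := by
        ext e; simp only [Finset.mem_filter, Finset.mem_sdiff]; tauto
      have e2 : (O \ C).filter (fun e => x ∈ e)
          = O.filter (fun e => x ∈ e) \ C.filter (fun e => x ∈ e) := by
        ext e; simp only [Finset.mem_filter, Finset.mem_sdiff]; tauto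
      rw [Finset.filter_union, Finset.card_union_of_disjoint (by
        rw [e1, e2]; exact disjoint_sdiff_sdiff), e1, e2]
      have i1 := Finset.card_sdiff_add_card_inter (C.filter (fun e => x ∈ e))
        (O.filter (fun e => x ∈ e))
      have i2 := Finset.card_sdiff_add_card_inter (O.filter (fun e => x ∈ e))
        (C.filter (fun e => x ∈ e))
      have i3 : (C.filter (fun e => x ∈ e) ∩ O.filter (fun e => x ∈ e)).card
          = (O.filter (fun e => x ∈ e) ∩ C.filter (fun e => x ∈ e)).card := by
        rw [Finset.inter_comm]
      rw [Nat.even_iff] at h1 h2 ⊢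
      omega
    obtain ⟨u2, ε, hε, hεe⟩ := exists_cycle_of_even_deg G ((C \ O) ∪ (O \ C))
      (fun e he => by
        rcases Finset.mem_union.mp he with h | h
        · exact hTsubE e (hCsub (Finset.sdiff_subset h))
        · exact hTsubE e (hOsubT (Finset.sdiff_subset h))) hD'deg hD'ne
    have hεg : g ≤ ((C \ O) ∪ (O \ C)).card := cycCard u2 ε hε _ hεe
    have hCOsubF : (C \ O) ⊆ F := by
      intro e he
      rw [Finset.mem_sdiff] at he
      rw [hF, Finset.mem_filter]
      refine ⟨hCsub he.1, fun ho => he.2 ?_⟩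
      rw [hO]
      exact Finset.mem_filter.mpr ⟨hCsub he.1, ho⟩
    have hk := Finset.card_le_card hCOsubF
    have i1 := Finset.card_sdiff_add_card_inter C O
    have i2 := Finset.card_sdiff_add_card_inter O C
    have i3 : (C ∩ O).card = (O ∩ C).card := by rw [Finset.inter_comm]
    have hDcard := Finset.card_union_of_disjoint
      (disjoint_sdiff_sdiff (x := C) (y := O))
    omega
  -- assembling the answer
  have hOedge : {e : Sym2 V | e ∈ δ.edges} = (↑O : Set (Sym2 V)) := by
    ext e
    rw [hODeq, hD]
    simp
  have hOsubW : (↑O : Set (Sym2 V)) ⊆ {e : Sym2 V | e ∈ w.edges} := by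
    intro e he
    exact (hmemS e).mp (hOsubT (Finset.mem_coe.mp he))
  have huniqSet : ∀ s' : Set (Sym2 V),
      (∃ (u : V) (c : G.Walk u u), c.IsCycle ∧ {e | e ∈ c.edges} = s') →
      s' ⊆ {e | e ∈ w.edges} → s' = (↑O : Set (Sym2 V)) := by
    rintro s' ⟨u', c', hc', hs'⟩ hsub'
    have hce' : ∀ e ∈ c'.edges, e ∈ w.edges := by
      intro e he
      exact hsub' (hs' ▸ (he : e ∈ {e | e ∈ c'.edges}))
    have h := huniq u' c' hc' hce'
    rw [← hs']
    ext e
    simp only [Set.mem_setOf_eq, Finset.coe_filter, ← h, Finset.mem_coe, List.mem_toFinset]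
  constructor
  · refine ⟨(↑O : Set (Sym2 V)), ⟨⟨u0, δ, hδ, hOedge⟩, hOsubW⟩, ?_⟩
    rintro s' ⟨hex, hsub'⟩
    exact huniqSet s' hex hsub'
  · intro s' hex hsub'
    have heq : s' = (↑O : Set (Sym2 V)) := huniqSet s' hex hsub'
    constructor
    · intro e hew hens'
      have h1 : e ∉ O := fun h => hens' (heq ▸ (Finset.mem_coe.mpr h))
      have h2 : e ∈ m.toFinset := (hmemS e).mpr hew
      have h3 : ¬ Odd (m.count e) := fun ho => h1 (by rw [hO]; exact Finset.mem_filter.mpr ⟨h2, ho⟩)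
      obtain ⟨k, hk⟩ := Nat.not_odd_iff_even.mp h3
      have h4 : m.count e = w.edges.count e := by rw [hm, Multiset.coe_count]
      exact ⟨k, by omega⟩
    · have hsetF : {e : Sym2 V | e ∈ w.edges ∧ e ∉ s'} = (↑F : Set (Sym2 V)) := by
        ext e
        simp only [Set.mem_setOf_eq, Finset.mem_coe, heq]
        constructor
        · rintro ⟨h1, h2⟩
          rw [hF]
          refine Finset.mem_filter.mpr ⟨(hmemS e).mpr h1, fun ho => h2 ?_⟩
          exact Finset.mem_coe.mpr (by rw [hO]; exact Finset.mem_filter.mpr ⟨(hmemS e).mpr h1, ho⟩)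
        · intro h1
          rw [hF] at h1
          obtain ⟨hT', hodd⟩ := Finset.mem_filter.mp h1
          refine ⟨(hmemS e).mp hT', fun hs => ?_⟩
          have : e ∈ O := Finset.mem_coe.mp hs
          rw [hO] at this
          exact hodd (Finset.mem_filter.mp this).2
      rw [hsetF]
      intro u2 c2 hc2
      obtain ⟨c2', hc2', hc2e⟩ := cycle_transfer (S := (↑F : Set (Sym2 V)))
        (fun e he => hTsubE e (hFsubT (Finset.mem_coe.mp he))) hc2
      have hFg : g ≤ F.card := cycCard _ c2' hc2' F (fun e he => Finset.mem_coe.mp (hc2e e he))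
      omega
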